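/- Let C be a 3×3 unitary matrix with entries a^{(i,j)}, e^{iΔ} = det C, and λ ∈ ℝ with a^{(1,1)}e^{iλ} − e^{iΔ} conj(a^{(3,3)}) ≠ 0. Then the two eigenvalues ζ⁺, ζ⁻ of the transfer matrix T(λ) (the roots of z² − (tr T(λ))z + det T(λ)) satisfy |ζ⁺| ≠ |ζ⁻| if and only if |tr T(λ)| > 2, where tr T(λ) = (e^{iλ}(e^{iλ} − a^{(2,2)}) − e^{iΔ}(e^{−iλ} − conj(a^{(2,2)})))/(a^{(1,1)}e^{iλ} − e^{iΔ} conj(a^{(3,3)})). -/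

import Mathlib

open Complex Matrix ComplexConjugate

noncomputable section

/-- The transfer matrix `T(λ)` of a 3×3 coin matrix `M`. -/
def transfer (M : Matrix (Fin 3) (Fin 3) ℂ) (lam : ℝ) : Matrix (Fin 2) (Fin 2) ℂ :=
  (M 0 0 * Complex.exp (lam * Complex.I) - M.det * conj (M 2 2))⁻¹ •
    !![Complex.exp (lam * Complex.I) * (Complex.exp (lam * Complex.I) - M 1 1),
        -(M 0 2 * Complex.exp (lam * Complex.I)) - M.det * conj (M 2 0);
        M 2 0 * Complex.exp (lam * Complex.I) + M.det * conj (M 0 2),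
        -(M.det * (Complex.exp (-(lam * Complex.I)) - conj (M 1 1)))]

lemma re_eq_zero_of_sq_nonpos' (x : ℂ) (s : ℝ) (hs : s ≤ 0) (h : x^2 = (s:ℂ)) : x.re = 0 := by
  have him : x.re * x.im + x.im * x.re = 0 := by
    have := congrArg Complex.im h
    simpa [pow_two, Complex.mul_im] using this
  have hre : x.re * x.re - x.im * x.im = s := by
    have := congrArg Complex.re h
    simpa [pow_two, Complex.mul_re] using this
  rcases mul_eq_zero.mp (by linarith : x.re * x.im = 0) with h0 | h0
  · nlinarith
  · nlinarith

lemma root_abs_lemma' (t δ ζ₁ ζ₂ : ℂ) (hδ : ‖δ‖ = 1) (hc : conj t * δ = t)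
    (hs : ζ₁ + ζ₂ = t) (hp : ζ₁ * ζ₂ = δ) : (‖ζ₁‖ ≠ ‖ζ₂‖ ↔ 2 < ‖t‖) := by
  constructor
  · intro hne
    by_contra hle
    push_neg at hle
    apply hne
    have hδδ : δ * conj δ = 1 := by
      rw [Complex.mul_conj]
      norm_cast
      rw [Complex.normSq_eq_norm_sq, hδ]; norm_num
    have hct : conj t = t * conj δ := by
      calc conj t = (conj t * δ) * conj δ := by rw [mul_assoc, hδδ, mul_one]
        _ = t * conj δ := by rw [hc]
    have ht2 : t * conj t = ((‖t‖^2 : ℝ) : ℂ) := by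
      rw [Complex.mul_conj]
      norm_cast
      rw [Complex.normSq_eq_norm_sq]
    have h5 : t^2 * conj δ = ((‖t‖^2 : ℝ) : ℂ) := by
      rw [← ht2, hct]; ring
    set x := (ζ₁ - ζ₂) * conj t with hxdef
    have hu : (ζ₁ - ζ₂)^2 = t^2 - 4*δ := by rw [← hs, ← hp]; ring
    have hx2 : x^2 = (((‖t‖^2 - 4) * ‖t‖^2 : ℝ) : ℂ) := by
      have hh : x^2 = (ζ₁ - ζ₂)^2 * (conj t)^2 := by ring
      rw [hh, hu, hct]
      push_cast
      push_cast at h5 hδδ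
      linear_combination (t^2*conj δ + (‖t‖:ℂ)^2 - 4*δ*conj δ) * h5 - 4*(‖t‖:ℂ)^2*hδδ
    have hre : x.re = 0 := by
      refine re_eq_zero_of_sq_nonpos' x _ ?_ hx2
      have h4 : ‖t‖^2 ≤ 4 := by nlinarith [norm_nonneg t]
      nlinarith [sq_nonneg (‖t‖)]
    have hns : Complex.normSq ζ₁ - Complex.normSq ζ₂ = x.re := by
      have hx' : x = (ζ₁ - ζ₂) * conj (ζ₁ + ζ₂) := by rw [hs]
      rw [hx', map_add]
      simp [Complex.mul_re, Complex.sub_re, Complex.sub_im, Complex.add_re, Complex.add_im,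
        Complex.conj_re, Complex.conj_im, Complex.normSq_apply]
      ring
    have : Complex.normSq ζ₁ = Complex.normSq ζ₂ := by rw [hre] at hns; linarith
    rw [Complex.norm_def, Complex.norm_def, this]
  · intro hgt heq
    have h1 : ‖ζ₁‖ * ‖ζ₂‖ = 1 := by rw [← norm_mul, hp, hδ]
    have h2 : ‖ζ₁‖ = 1 := by nlinarith [norm_nonneg ζ₁, norm_nonneg ζ₂]
    have : ‖t‖ ≤ 2 := by
      rw [← hs]
      calc ‖ζ₁ + ζ₂‖ ≤ ‖ζ₁‖ + ‖ζ₂‖ := norm_add_le _ _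
        _ = 2 := by rw [← heq, h2]; norm_num
    linarith

/-- for the transfer matrix `T(λ)` of a 3×3 unitary coin `M`, the two
eigenvalues `ζ⁺, ζ⁻` (roots of `z² − (tr T(λ)) z + det T(λ)`) have distinct moduli iff
`|tr T(λ)| > 2`, where `tr T(λ)` has the displayed closed form. -/
theorem transfer_eigenvalues_distinct_abs_iff (M : Matrix (Fin 3) (Fin 3) ℂ)
    (hM : M ∈ Matrix.unitaryGroup (Fin 3) ℂ) (lam : ℝ)
    (hden : M 0 0 * Complex.exp (lam * Complex.I) - M.det * conj (M 2 2) ≠ 0) :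
    (transfer M lam).trace =
      (Complex.exp (lam * Complex.I) * (Complex.exp (lam * Complex.I) - M 1 1) -
          M.det * (Complex.exp (-(lam * Complex.I)) - conj (M 1 1))) /
        (M 0 0 * Complex.exp (lam * Complex.I) - M.det * conj (M 2 2)) ∧
    ∀ ζ₁ ζ₂ : ℂ,
      ζ₁ + ζ₂ = (transfer M lam).trace → ζ₁ * ζ₂ = (transfer M lam).det →
      (‖ζ₁‖ ≠ ‖ζ₂‖ ↔ 2 < ‖(transfer M lam).trace‖) := by
  set E := Complex.exp (lam * Complex.I) with hEdef
  set D := M.det with hDdef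
  have hE : E ≠ 0 := Complex.exp_ne_zero _
  have hED : E * E⁻¹ = 1 := mul_inv_cancel₀ hE
  have hEinv : Complex.exp (-(lam * Complex.I)) = E⁻¹ := by
    rw [hEdef, ← Complex.exp_neg]
  have hconjE : conj E = E⁻¹ := by
    rw [hEdef, ← Complex.exp_conj, ← Complex.exp_neg]
    congr 1
    simp [Complex.conj_ofReal, Complex.conj_I]
  have hU2 : M * star M = 1 := Matrix.mem_unitaryGroup_iff.mp hM
  have hU1 : star M * M = 1 := Matrix.mem_unitaryGroup_iff'.mp hM
  have row0 : M 0 0 * conj (M 0 0) + M 0 1 * conj (M 0 1) + M 0 2 * conj (M 0 2) = 1 := by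
    have := congrArg (fun A => A 0 0) hU2
    simpa [Matrix.mul_apply, Fin.sum_univ_three, Matrix.one_apply] using this
  have row2 : M 2 0 * conj (M 2 0) + M 2 1 * conj (M 2 1) + M 2 2 * conj (M 2 2) = 1 := by
    have := congrArg (fun A => A 2 2) hU2
    simpa [Matrix.mul_apply, Fin.sum_univ_three, Matrix.one_apply] using this
  have col1 : conj (M 0 1) * M 0 1 + conj (M 1 1) * M 1 1 + conj (M 2 1) * M 2 1 = 1 := by
    have := congrArg (fun A => A 1 1) hU1
    simpa [Matrix.mul_apply, Fin.sum_univ_three, Matrix.one_apply] using this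
  have hnorm : M 0 0 * conj (M 0 0) + M 0 2 * conj (M 0 2) + M 2 0 * conj (M 2 0)
      + M 2 2 * conj (M 2 2) = 1 + M 1 1 * conj (M 1 1) := by
    linear_combination row0 + row2 - col1
  have hDD : D * conj D = 1 := by
    have := congrArg Matrix.det hU2
    rw [Matrix.det_mul, Matrix.star_eq_conjTranspose, Matrix.det_conjTranspose,
      Matrix.det_one] at this
    exact this
  have hadj : M.adjugate = M.det • star M := by
    calc M.adjugate = (star M * M) * M.adjugate := by rw [hU1, one_mul]
      _ = star M * (M * M.adjugate) := by rw [mul_assoc]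
      _ = star M * (M.det • 1) := by rw [Matrix.mul_adjugate]
      _ = M.det • star M := by rw [Matrix.mul_smul, mul_one]
  have hcof : M 0 0 * M 2 2 - M 0 2 * M 2 0 = D * conj (M 1 1) := by
    have := congrArg (fun A => A 1 1) hadj
    rw [Matrix.adjugate_fin_three] at this
    simpa [Matrix.star_eq_conjTranspose, Matrix.conjTranspose_apply] using this
  have hcof' : conj (M 0 0) * conj (M 2 2) - conj (M 0 2) * conj (M 2 0)
      = conj D * M 1 1 := by
    have := congrArg conj hcof
    simpa [map_sub, _root_.map_mul] using this
  set dd := M 0 0 * E - D * conj (M 2 2) with hdddef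
  have hcd : conj dd = conj (M 0 0) * E⁻¹ - conj D * M 2 2 := by
    rw [hdddef]
    simp [map_sub, _root_.map_mul, hconjE]
  -- trace
  have htr : (transfer M lam).trace
      = (E * (E - M 1 1) - D * (Complex.exp (-(lam * Complex.I)) - conj (M 1 1))) / dd := by
    rw [transfer, Matrix.trace_smul, Matrix.trace_fin_two_of, smul_eq_mul, ← hEdef, ← hDdef,
      ← hdddef, inv_mul_eq_div]
    ring_nf
  -- determinant
  have hkey : E * (E * (E - M 1 1) * -(D * (E⁻¹ - conj (M 1 1)))
        - (-(M 0 2 * E) - D * conj (M 2 0)) * (M 2 0 * E + D * conj (M 0 2)))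
      = E * (-(D * E) * (conj (M 0 0) * E⁻¹ - conj D * M 2 2) * dd) := by
    rw [hdddef]
    linear_combination (D*E^2*(M 0 0 * conj (M 0 0) - 1)
        + D*E*(M 1 1 - D * conj (M 0 0) * conj (M 2 2))) * hED
      - E^3 * hcof - (M 0 0 * M 2 2) * E^3 * hDD + D*E^2 * hnorm
      + D * (M 2 2 * conj (M 2 2)) * E^2 * hDD - D*E*(M 1 1) * hDD - D^2*E * hcof'
  have hA : E * (E - M 1 1) * -(D * (E⁻¹ - conj (M 1 1)))
        - (-(M 0 2 * E) - D * conj (M 2 0)) * (M 2 0 * E + D * conj (M 0 2))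
      = -(D * E) * (conj (M 0 0) * E⁻¹ - conj D * M 2 2) * dd :=
    mul_left_cancel₀ hE hkey
  have hdetT : (transfer M lam).det = -(D * E) * conj dd / dd := by
    rw [transfer, Matrix.det_smul, Matrix.det_fin_two_of, ← hEdef, ← hDdef, ← hdddef, hEinv,
      hcd]
    rw [show (Fintype.card (Fin 2)) = 2 from rfl]
    rw [hA]
    field_simp
  have hddc : conj dd ≠ 0 := by
    intro h
    exact hden (by simpa using congrArg conj h)
  -- |det| = 1
  have hDn : ‖D‖ = 1 := by
    have := congrArg norm hDD
    rw [norm_mul, RCLike.norm_conj, norm_one] at this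
    rcases mul_self_eq_one_iff.mp this with h | h
    · exact h
    · have := norm_nonneg D; linarith
  have hEn : ‖E‖ = 1 := by
    rw [hEdef, Complex.norm_exp_ofReal_mul_I]
  have hdetn : ‖(transfer M lam).det‖ = 1 := by
    rw [hdetT, norm_div, norm_mul, norm_neg, norm_mul, RCLike.norm_conj, hDn, hEn]
    field_simp
  -- conj(tr) * det = tr
  have hconjN : conj (E * (E - M 1 1) - D * (Complex.exp (-(lam * Complex.I)) - conj (M 1 1)))
      = E⁻¹ * (E⁻¹ - conj (M 1 1)) - conj D * (E - M 1 1) := by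
    rw [hEinv]
    simp only [map_sub, _root_.map_mul, hconjE, map_inv₀, inv_inv, Complex.conj_conj]
  have hctr : conj ((transfer M lam).trace) * (transfer M lam).det = (transfer M lam).trace := by
    rw [htr, hdetT, map_div₀, hconjN]
    rw [div_mul_div_comm]
    rw [div_eq_div_iff (mul_ne_zero hddc hden) hden]
    have hmain : (E⁻¹ * (E⁻¹ - conj (M 1 1)) - conj D * (E - M 1 1)) * (-(D * E) * conj dd)
        = (E * (E - M 1 1) - D * (Complex.exp (-(lam * Complex.I)) - conj (M 1 1))) * conj dd := by
      rw [hEinv]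
      have base : (E⁻¹ * (E⁻¹ - conj (M 1 1)) - conj D * (E - M 1 1)) * (-(D * E))
          = E * (E - M 1 1) - D * (E⁻¹ - conj (M 1 1)) := by
        linear_combination (-(D*(E⁻¹ - conj (M 1 1)))) * hED + E*(E - M 1 1) * hDD
      linear_combination conj dd * base
    linear_combination dd * hmain
  refine ⟨htr, ?_⟩
  intro ζ₁ ζ₂ hs hp
  exact root_abs_lemma' _ _ _ _ hdetn hctr hs hp
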